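/- Let H be a group, h ∈ H non-trivial, n ≥ 2, G = H₁ ∗ ⋯ ∗ Hₙ the free product of n copies of H, and ρ : Bₙ → Aut(G) the Artin type representation associated to (H,h). Set G′ = H₂ ∗ ⋯ ∗ Hₙ, so that G = H₁ ∗ G′. Let u ∈ G be an element whose normal form with respect to the decomposition G = H₁ ∗ G′ starts with h₁⁻¹ and ends with h₁ (i.e., in the unique alternating reduced expression of u as a product of non-trivial elements alternately from H₁ and G′, the first factor is the element h₁⁻¹ of H₁ and the last factor is the element h₁ of H₁). Then the normal form of ρ(σ₁)(u) with respect to the decomposition G = H₁ ∗ G′ also starts with h₁⁻¹ and ends with h₁. -/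

import Mathlib

def braidRels (m : ℕ) : Set (FreeGroup (Fin m)) :=
  { r | (∃ i j : Fin m, (i : ℕ) + 1 = (j : ℕ) ∧
          r = FreeGroup.of i * FreeGroup.of j * FreeGroup.of i *
              (FreeGroup.of j * FreeGroup.of i * FreeGroup.of j)⁻¹) ∨
        (∃ i j : Fin m, (i : ℕ) + 2 ≤ (j : ℕ) ∧
          r = FreeGroup.of i * FreeGroup.of j * (FreeGroup.of j * FreeGroup.of i)⁻¹) }

abbrev BraidGroup (m : ℕ) : Type := PresentedGroup (braidRels m)

def braidGen {m : ℕ} (i : Fin m) : BraidGroup m := PresentedGroup.of i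

def idx0 {n : ℕ} (k : Fin (n - 1)) : Fin n := ⟨k.1, by have := k.2; omega⟩
def idx1 {n : ℕ} (k : Fin (n - 1)) : Fin n := ⟨k.1 + 1, by have := k.2; omega⟩

def IsArtinRep {n : ℕ} {H : Type} [Group H] (h : H)
    (ρ : BraidGroup (n - 1) →* MulAut (Monoid.CoprodI (fun _ : Fin n => H))) : Prop :=
  ∀ k : Fin (n - 1),
    (∀ y : H, ρ (braidGen k) (Monoid.CoprodI.of (i := idx0 k) y) =
        (Monoid.CoprodI.of (i := idx0 k) h)⁻¹ * Monoid.CoprodI.of (i := idx1 k) y *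
          Monoid.CoprodI.of (i := idx0 k) h) ∧
    (∀ y : H, ρ (braidGen k) (Monoid.CoprodI.of (i := idx1 k) y) =
        Monoid.CoprodI.of (i := idx0 k) h * Monoid.CoprodI.of (i := idx0 k) y *
          (Monoid.CoprodI.of (i := idx0 k) h)⁻¹) ∧
    (∀ j : Fin n, j ≠ idx0 k → j ≠ idx1 k →
      ∀ y : H, ρ (braidGen k) (Monoid.CoprodI.of (i := j) y) = Monoid.CoprodI.of (i := j) y)

/-- `u` has (free-product) normal form with respect to the decomposition `G = H₁ ∗ G′`
which starts with `h₁⁻¹` and ends with `h₁`: it can be written as an alternating reduced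
word `h₁⁻¹ · w₀ · v₀ · w₁ · v₁ ⋯ w_{m-1} · h₁` with the `wᵢ` non-trivial elements of `G′`
and the `vᵢ` (for `i < m-1`) non-trivial elements of `H₁`. -/
def NFStartsEnds {G : Type} [Group G] (H1 G' : Subgroup G) (h1 : G) (u : G) : Prop :=
  ∃ (m : ℕ) (w v : ℕ → G), 1 ≤ m ∧
    (∀ i < m, w i ∈ G' ∧ w i ≠ 1) ∧
    (∀ i, i + 1 < m → v i ∈ H1 ∧ v i ≠ 1) ∧
    v (m - 1) = h1 ∧
    u = h1⁻¹ * ((List.range m).map (fun i => w i * v i)).prod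

set_option linter.unusedSectionVars false

namespace NFAux
open Monoid
variable {n : ℕ} {H : Type} [Group H]

def prodL (l : List (Fin n × H)) : Monoid.CoprodI (fun _ : Fin n => H) :=
  (l.map (fun p => Monoid.CoprodI.of (M := fun _ : Fin n => H) (i := p.1) p.2)).prod

@[simp] theorem prodL_nil : prodL ([] : List (Fin n × H)) = 1 := rfl

@[simp] theorem prodL_cons (p : Fin n × H) (l : List (Fin n × H)) :
    prodL (p :: l) = Monoid.CoprodI.of (M := fun _ : Fin n => H) (i := p.1) p.2 * prodL l := by
  simp [prodL]

@[simp] theorem prodL_append (l₁ l₂ : List (Fin n × H)) :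
    prodL (l₁ ++ l₂) = prodL l₁ * prodL l₂ := by simp [prodL]

def Red (l : List (Fin n × H)) : Prop :=
  (∀ p ∈ l, p.2 ≠ 1) ∧ l.Chain' (fun p q => p.1 ≠ q.1)

theorem prodL_ne_one {l : List (Fin n × H)} (hl : Red l) (hne : l ≠ []) : prodL l ≠ 1 := by
  letI : DecidableEq H := Classical.decEq H
  intro hone
  let w : Monoid.CoprodI.Word (fun _ : Fin n => H) :=
    { toList := l.map (fun p => ⟨p.1, p.2⟩)
      ne_one := by
        intro q hq
        simp only [List.mem_map] at hq
        obtain ⟨p, hp, rfl⟩ := hq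
        exact hl.1 p hp
      chain_ne := by
        refine (List.isChain_map _).2 ?_
        exact hl.2 }
  have hw : w.prod = prodL l := by
    simp only [Monoid.CoprodI.Word.prod, prodL, List.map_map]
    simp only [w, List.map_map]
    rfl
  have hinj := (Monoid.CoprodI.Word.equiv (M := fun _ : Fin n => H)).symm.injective
  have hw2 : w = Monoid.CoprodI.Word.empty := by
    apply hinj
    show w.prod = Monoid.CoprodI.Word.prod _
    rw [hw, hone, Monoid.CoprodI.Word.prod_empty]
  have : l.map (fun p : Fin n × H => (⟨p.1, p.2⟩ : Σ _ : Fin n, H)) = [] :=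
    congrArg Monoid.CoprodI.Word.toList hw2
  simp only [List.map_eq_nil_iff] at this
  exact hne this


theorem cons_reduce {Q : Fin n → Prop} (j : Fin n) (y : H) (l : List (Fin n × H))
    (hl : Red l) (hQ : ∀ p ∈ l, Q p.1) (hj : Q j) :
    ∃ l', Red l' ∧ (∀ p ∈ l', Q p.1) ∧
      prodL l' = Monoid.CoprodI.of (M := fun _ : Fin n => H) (i := j) y * prodL l := by
  match l with
  | [] =>
    by_cases hy : y = 1
    · exact ⟨[], ⟨by simp, List.isChain_nil⟩, by simp, by simp [hy]⟩
    · refine ⟨[(j, y)], ⟨?_, List.isChain_singleton _⟩, ?_, by simp⟩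
      · intro p hp; simp only [List.mem_singleton] at hp; subst hp; exact hy
      · intro p hp; simp only [List.mem_singleton] at hp; subst hp; exact hj
  | (k, z) :: t =>
    by_cases hjk : j = k
    · subst hjk
      by_cases hyz : y * z = 1
      · refine ⟨t, ⟨fun p hp => hl.1 p (List.mem_cons_of_mem _ hp), hl.2.tail⟩,
          fun p hp => hQ p (List.mem_cons_of_mem _ hp), ?_⟩
        rw [prodL_cons, ← mul_assoc, ← map_mul, hyz, map_one, one_mul]
      · refine ⟨(j, y * z) :: t, ⟨?_, ?_⟩, ?_, ?_⟩
        · intro p hp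
          rcases List.mem_cons.1 hp with rfl | hp
          · exact hyz
          · exact hl.1 p (List.mem_cons_of_mem _ hp)
        · rcases List.isChain_cons.1 hl.2 with ⟨h1, h2⟩
          exact List.isChain_cons.2 ⟨h1, h2⟩
        · intro p hp
          rcases List.mem_cons.1 hp with rfl | hp
          · exact hj
          · exact hQ p (List.mem_cons_of_mem _ hp)
        · rw [prodL_cons, prodL_cons, ← mul_assoc, ← map_mul]
    · by_cases hy : y = 1
      · exact ⟨(k, z) :: t, hl, hQ, by simp [hy]⟩
      · refine ⟨(j, y) :: (k, z) :: t, ⟨?_, List.isChain_cons_cons.2 ⟨hjk, hl.2⟩⟩, ?_, by rw [prodL_cons]⟩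
        · intro p hp
          rcases List.mem_cons.1 hp with rfl | hp
          · exact hy
          · exact hl.1 p hp
        · intro p hp
          rcases List.mem_cons.1 hp with rfl | hp
          · exact hj
          · exact hQ p hp

theorem reduce_list {Q : Fin n → Prop} (l : List (Fin n × H)) (hQ : ∀ p ∈ l, Q p.1) :
    ∃ l', Red l' ∧ (∀ p ∈ l', Q p.1) ∧ prodL l' = prodL l := by
  induction l with
  | nil => exact ⟨[], ⟨by simp, List.isChain_nil⟩, by simp, rfl⟩
  | cons p t ih =>
    obtain ⟨l', h1, h2, h3⟩ := ih (fun q hq => hQ q (List.mem_cons_of_mem _ hq))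
    obtain ⟨l'', g1, g2, g3⟩ := cons_reduce p.1 p.2 l' h1 h2 (hQ p (List.mem_cons_self))
    exact ⟨l'', g1, g2, by rw [g3, h3, prodL_cons]⟩

theorem exists_raw (e0 : Fin n) {w : Monoid.CoprodI (fun _ : Fin n => H)}
    (hw : w ∈ ⨆ (j : Fin n) (_ : j ≠ e0),
      MonoidHom.range (Monoid.CoprodI.of (M := fun _ : Fin n => H) (i := j))) :
    ∃ l : List (Fin n × H), (∀ p ∈ l, p.1 ≠ e0) ∧ prodL l = w := by
  refine Subgroup.iSup_induction _ (C := fun x => ∃ l : List (Fin n × H),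
    (∀ p ∈ l, p.1 ≠ e0) ∧ prodL l = x) hw (fun j x hx => ?_) ⟨[], by simp, rfl⟩ ?_
  · by_cases hj : j = e0
    · subst hj
      rw [iSup_neg (by simp)] at hx
      obtain rfl := Subgroup.mem_bot.mp hx
      exact ⟨[], by simp, rfl⟩
    · rw [iSup_pos hj] at hx
      obtain ⟨y, rfl⟩ := hx
      refine ⟨[(j, y)], ?_, by simp⟩
      intro p hp; simp only [List.mem_singleton] at hp; subst hp; exact hj
  · rintro x y ⟨lx, hx1, rfl⟩ ⟨ly, hy1, rfl⟩
    refine ⟨lx ++ ly, ?_, by simp⟩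
    intro p hp
    rcases List.mem_append.1 hp with hp | hp
    · exact hx1 p hp
    · exact hy1 p hp

theorem prodL_mem (e0 : Fin n) {l : List (Fin n × H)} (hl : ∀ p ∈ l, p.1 ≠ e0) :
    prodL l ∈ ⨆ (j : Fin n) (_ : j ≠ e0),
      MonoidHom.range (Monoid.CoprodI.of (M := fun _ : Fin n => H) (i := j)) := by
  induction l with
  | nil => simpa using Subgroup.one_mem _
  | cons p t ih =>
    rw [prodL_cons]
    refine Subgroup.mul_mem _ ?_ (ih fun q hq => hl q (List.mem_cons_of_mem _ hq))
    exact Subgroup.mem_iSup_of_mem p.1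
      (Subgroup.mem_iSup_of_mem (hl p (List.mem_cons_self)) ⟨p.2, rfl⟩)


theorem run_split (e0 : Fin n) : ∀ (l : List (Fin n × H)), l ≠ [] →
    (∀ q ∈ l.head?, q.1 ≠ e0) →
    ∃ r t, l = r ++ t ∧ r ≠ [] ∧ (∀ p ∈ r, p.1 ≠ e0) ∧
      (t = [] ∨ ∃ a t', t = (e0, a) :: t') := by
  intro l
  induction l with
  | nil => simp
  | cons p t ih =>
    intro _ hhead
    have hp : p.1 ≠ e0 := hhead p rfl
    match t, ih with
    | [], _ =>
      refine ⟨[p], [], by simp, by simp, ?_, Or.inl rfl⟩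
      intro q hq; simp only [List.mem_singleton] at hq; subst hq; exact hp
    | q :: t', ih =>
      by_cases hq : q.1 = e0
      · refine ⟨[p], q :: t', by simp, by simp, ?_, Or.inr ⟨q.2, t', by rw [← hq]⟩⟩
        intro r hr; simp only [List.mem_singleton] at hr; subst hr; exact hp
      · obtain ⟨r', t'', heq, hrne, hrQ, ht⟩ := ih (by simp) (by
          intro x hx; simp only [List.head?_cons, Option.mem_def, Option.some.injEq] at hx
          subst hx; exact hq)
        refine ⟨p :: r', t'', by rw [List.cons_append, ← heq], by simp, ?_, ht⟩
        intro x hx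
        rcases List.mem_cons.1 hx with rfl | hx
        · exact hp
        · exact hrQ x hx

theorem grouping (e0 : Fin n) : ∀ (N : ℕ) (l : List (Fin n × H)), l.length ≤ N → Red l →
    l ≠ [] → (∀ q ∈ l.head?, q.1 ≠ e0) → (∀ q ∈ l.getLast?, q.1 ≠ e0) →
    ∃ (P : List (Monoid.CoprodI (fun _ : Fin n => H) × Monoid.CoprodI (fun _ : Fin n => H)))
      (g : Monoid.CoprodI (fun _ : Fin n => H)),
      (∀ p ∈ P, (p.1 ∈ (⨆ (j : Fin n) (_ : j ≠ e0),
          MonoidHom.range (Monoid.CoprodI.of (M := fun _ : Fin n => H) (i := j))) ∧ p.1 ≠ 1) ∧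
        (p.2 ∈ MonoidHom.range (Monoid.CoprodI.of (M := fun _ : Fin n => H) (i := e0)) ∧ p.2 ≠ 1)) ∧
      g ∈ (⨆ (j : Fin n) (_ : j ≠ e0),
          MonoidHom.range (Monoid.CoprodI.of (M := fun _ : Fin n => H) (i := j))) ∧ g ≠ 1 ∧
      prodL l = (P.map fun p => p.1 * p.2).prod * g := by
  intro N
  induction N with
  | zero =>
    intro l hlen _ hne _ _
    cases l with
    | nil => exact absurd rfl hne
    | cons p t => simp at hlen
  | succ N ih =>
    intro l hlen hred hne hhead hlast
    obtain ⟨r, t, rfl, hrne, hrQ, ht⟩ := run_split e0 l hne hhead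
    rcases ht with rfl | ⟨a, t', rfl⟩
    · rw [List.append_nil] at hred hlast ⊢
      exact ⟨[], prodL r, by simp, prodL_mem _ hrQ, prodL_ne_one hred hrne, by simp⟩
    · -- l = r ++ (e0, a) :: t'
      have hchain := hred.2
      rw [List.Chain', List.isChain_append] at hchain
      obtain ⟨hcr, hct, hjunc⟩ := hchain
      have ht'ne : t' ≠ [] := by
        rintro rfl
        exact hlast (e0, a) (by rw [List.getLast?_concat]; rfl) rfl
      have hredt' : Red t' := by
        refine ⟨fun p hp => hred.1 p (by simp [hp]), (List.isChain_cons.1 hct).2⟩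
      have hheadt' : ∀ q ∈ t'.head?, q.1 ≠ e0 := by
        intro q hq
        have := (List.isChain_cons.1 hct).1 q hq
        exact fun hc => this (by rw [hc])
      have hlastt' : ∀ q ∈ t'.getLast?, q.1 ≠ e0 := by
        intro q hq
        apply hlast
        rw [List.getLast?_append_of_ne_nil _ (by simp [ht'ne])]
        show q ∈ (((e0, a) :: []) ++ t').getLast?
        rw [List.getLast?_append_of_ne_nil _ ht'ne]
        exact hq
      have hlen' : t'.length ≤ N := by
        have := (List.length_append (as := r) (bs := (e0, a) :: t')) ▸ hlen
        have hr1 : 1 ≤ r.length := List.length_pos_iff.2 hrne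
        simp only [List.length_cons] at this
        omega
      obtain ⟨P', g', hP', hg'mem, hg'ne, hprod⟩ := ih t' hlen' hredt' ht'ne hheadt' hlastt'
      have hane : a ≠ 1 := hred.1 (e0, a) (by simp)
      have hredr : Red r := ⟨fun p hp => hred.1 p (by simp [hp]), hcr⟩
      refine ⟨(prodL r, Monoid.CoprodI.of (M := fun _ : Fin n => H) (i := e0) a) :: P', g', ?_,
        hg'mem, hg'ne, ?_⟩
      · intro p hp
        rcases List.mem_cons.1 hp with rfl | hp
        · refine ⟨⟨prodL_mem _ hrQ, prodL_ne_one hredr hrne⟩, ⟨a, rfl⟩, fun hc => hane ?_⟩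
          have hc' : Monoid.CoprodI.of (M := fun _ : Fin n => H) (i := e0) a =
              Monoid.CoprodI.of (M := fun _ : Fin n => H) (i := e0) 1 := by
            rw [map_one]; exact hc
          exact Monoid.CoprodI.of_injective e0 hc'
        · exact hP' p hp
      · rw [prodL_append, prodL_cons, hprod]
        simp [mul_assoc]

theorem map_range_getD {α β : Type*} (d : α) (f : α → β) :
    ∀ P : List α, (List.range P.length).map (fun i => f (P.getD i d)) = P.map f
  | [] => rfl
  | a :: t => by
    rw [List.length_cons, List.range_succ_eq_map, List.map_cons, List.map_map, List.map_cons]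
    have h1 : f ((a :: t).getD 0 d) = f a := by rw [List.getD_cons_zero]
    rw [h1]
    congr 1
    rw [← map_range_getD d f t]
    apply List.map_congr_left
    intro i _
    simp only [Function.comp_apply, List.getD_cons_succ]


theorem conj_list (e0 e1 : Fin n) (hne : e0 ≠ e1) (h : H)
    (σ : Monoid.CoprodI (fun _ : Fin n => H) ≃* Monoid.CoprodI (fun _ : Fin n => H))
    (hσ1 : ∀ y : H, σ (Monoid.CoprodI.of (M := fun _ : Fin n => H) (i := e1) y) =
      Monoid.CoprodI.of (M := fun _ : Fin n => H) (i := e0) (h * y * h⁻¹))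
    (hσ2 : ∀ j : Fin n, j ≠ e0 → j ≠ e1 → ∀ y : H,
      σ (Monoid.CoprodI.of (M := fun _ : Fin n => H) (i := j) y) =
      Monoid.CoprodI.of (M := fun _ : Fin n => H) (i := j) y)
    {w : Monoid.CoprodI (fun _ : Fin n => H)}
    (hwG : w ∈ ⨆ (j : Fin n) (_ : j ≠ e0),
      MonoidHom.range (Monoid.CoprodI.of (M := fun _ : Fin n => H) (i := j)))
    (hw1 : w ≠ 1) :
    ∃ L : List (Fin n × H), Red L ∧ (∀ p ∈ L, p.1 ≠ e1) ∧ L ≠ [] ∧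
      prodL L = Monoid.CoprodI.of (M := fun _ : Fin n => H) (i := e0) h * σ w *
        (Monoid.CoprodI.of (M := fun _ : Fin n => H) (i := e0) h)⁻¹ := by
  classical
  obtain ⟨l, hl0, rfl⟩ := exists_raw e0 hwG
  set σL : Fin n × H → Fin n × H := fun p => if p.1 = e1 then (e0, h * p.2 * h⁻¹) else p with hσL
  have hmap : ∀ l' : List (Fin n × H), (∀ p ∈ l', p.1 ≠ e0) →
      σ (prodL l') = prodL (l'.map σL) := by
    intro l'
    induction l' with
    | nil => intro _; simp
    | cons p t ih =>
      intro hall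
      rw [prodL_cons, map_mul, List.map_cons, prodL_cons,
        ih (fun q hq => hall q (List.mem_cons_of_mem _ hq))]
      congr 1
      by_cases hp1 : p.1 = e1
      · have : σL p = (e0, h * p.2 * h⁻¹) := by rw [hσL]; simp [hp1]
        rw [this]
        have hp' : Monoid.CoprodI.of (M := fun _ : Fin n => H) (i := p.1) p.2 =
            Monoid.CoprodI.of (M := fun _ : Fin n => H) (i := e1) p.2 := by rw [hp1]
        rw [hp', hσ1]
      · have : σL p = p := by rw [hσL]; simp [hp1]
        rw [this, hσ2 p.1 (hall p (List.mem_cons_self)) hp1]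
  have hQmap : ∀ p ∈ ((e0, h) :: l.map σL ++ [(e0, h⁻¹)]), p.1 ≠ e1 := by
    intro p hp
    rcases List.mem_cons.1 hp with rfl | hp
    · exact hne
    rcases List.mem_append.1 hp with hp | hp
    · simp only [List.mem_map] at hp
      obtain ⟨q, hq, rfl⟩ := hp
      by_cases hq1 : q.1 = e1
      · have : σL q = (e0, h * q.2 * h⁻¹) := by rw [hσL]; simp [hq1]
        rw [this]; exact hne
      · have : σL q = q := by rw [hσL]; simp [hq1]
        rw [this]; exact hq1
    · simp only [List.mem_singleton] at hp; subst hp; exact hne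
  obtain ⟨L, hL1, hL2, hL3⟩ := reduce_list (Q := fun j => j ≠ e1) _ hQmap
  have hprod : prodL L = Monoid.CoprodI.of (M := fun _ : Fin n => H) (i := e0) h * σ (prodL l) *
      (Monoid.CoprodI.of (M := fun _ : Fin n => H) (i := e0) h)⁻¹ := by
    rw [hL3, List.cons_append, prodL_cons, prodL_append, hmap l hl0]
    simp only [prodL, List.map_cons, List.prod_cons, List.map_nil, List.prod_nil, mul_one,
      List.map_map, map_inv, mul_assoc]
  refine ⟨L, hL1, hL2, fun hc => hw1 ?_, hprod⟩
  have h2 : Monoid.CoprodI.of (M := fun _ : Fin n => H) (i := e0) h * σ (prodL l) *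
      (Monoid.CoprodI.of (M := fun _ : Fin n => H) (i := e0) h)⁻¹ = 1 := by
    rw [← hprod, hc, prodL_nil]
  have h3 : σ (prodL l) = σ 1 := by
    rw [map_one]
    calc σ (prodL l) = (Monoid.CoprodI.of (M := fun _ : Fin n => H) (i := e0) h)⁻¹ *
        (Monoid.CoprodI.of (M := fun _ : Fin n => H) (i := e0) h * σ (prodL l) *
          (Monoid.CoprodI.of (M := fun _ : Fin n => H) (i := e0) h)⁻¹) *
        Monoid.CoprodI.of (M := fun _ : Fin n => H) (i := e0) h := by group
      _ = 1 := by rw [h2]; group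
  exact σ.injective h3

theorem tail_list (e0 e1 : Fin n) (hne : e0 ≠ e1) (h : H) (hh : h ≠ 1)
    (σ : Monoid.CoprodI (fun _ : Fin n => H) ≃* Monoid.CoprodI (fun _ : Fin n => H))
    (hσ0 : ∀ y : H, σ (Monoid.CoprodI.of (M := fun _ : Fin n => H) (i := e0) y) =
      (Monoid.CoprodI.of (M := fun _ : Fin n => H) (i := e0) h)⁻¹ *
        Monoid.CoprodI.of (M := fun _ : Fin n => H) (i := e1) y *
        Monoid.CoprodI.of (M := fun _ : Fin n => H) (i := e0) h)
    (hσ1 : ∀ y : H, σ (Monoid.CoprodI.of (M := fun _ : Fin n => H) (i := e1) y) =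
      Monoid.CoprodI.of (M := fun _ : Fin n => H) (i := e0) (h * y * h⁻¹))
    (hσ2 : ∀ j : Fin n, j ≠ e0 → j ≠ e1 → ∀ y : H,
      σ (Monoid.CoprodI.of (M := fun _ : Fin n => H) (i := j) y) =
      Monoid.CoprodI.of (M := fun _ : Fin n => H) (i := j) y) :
    ∀ (m : ℕ) (w v : ℕ → Monoid.CoprodI (fun _ : Fin n => H)), 1 ≤ m →
      (∀ i < m, w i ∈ (⨆ (j : Fin n) (_ : j ≠ e0),
        MonoidHom.range (Monoid.CoprodI.of (M := fun _ : Fin n => H) (i := j))) ∧ w i ≠ 1) →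
      (∀ i, i + 1 < m → v i ∈ MonoidHom.range
          (Monoid.CoprodI.of (M := fun _ : Fin n => H) (i := e0)) ∧ v i ≠ 1) →
      v (m - 1) = Monoid.CoprodI.of (M := fun _ : Fin n => H) (i := e0) h →
      ∃ M : List (Fin n × H), Red M ∧ M ≠ [] ∧
        (∀ q ∈ M.head?, q.1 ≠ e1) ∧ (∀ q ∈ M.getLast?, q.1 = e1) ∧
        prodL M = Monoid.CoprodI.of (M := fun _ : Fin n => H) (i := e0) h *
          σ (((List.range m).map (fun i => w i * v i)).prod) *
          (Monoid.CoprodI.of (M := fun _ : Fin n => H) (i := e0) h)⁻¹ := by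
  intro m
  induction m with
  | zero => intro _ _ hm; omega
  | succ k ih =>
    intro w v _ hw hv hvlast
    rcases Nat.eq_zero_or_pos k with rfl | hk
    · -- base case m = 1
      obtain ⟨L, hL1, hL2, hL3, hL4⟩ := conj_list e0 e1 hne h σ hσ1 hσ2 (hw 0 (by omega)).1
        (hw 0 (by omega)).2
      obtain ⟨a, L', rfl⟩ : ∃ a L', L = a :: L' := by
        cases L with
        | nil => exact absurd rfl hL3
        | cons a L' => exact ⟨a, L', rfl⟩
      refine ⟨(a :: L') ++ [(e1, h)], ⟨?_, ?_⟩, by simp, ?_, ?_, ?_⟩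
      · intro p hp
        rcases List.mem_append.1 hp with hp | hp
        · exact hL1.1 p hp
        · simp only [List.mem_singleton] at hp; subst hp; exact hh
      · refine List.isChain_append.2 ⟨hL1.2, List.isChain_singleton _, ?_⟩
        intro x hx y hy
        simp only [List.head?_cons, Option.mem_def, Option.some.injEq] at hy
        subst hy
        exact hL2 x (List.mem_of_mem_getLast? hx)
      · intro q hq
        simp only [List.cons_append, List.head?_cons, Option.mem_def, Option.some.injEq] at hq
        subst hq
        exact hL2 a (List.mem_cons_self)
      · intro q hq
        rw [List.getLast?_concat] at hq
        simp only [Option.mem_def, Option.some.injEq] at hq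
        subst hq
        rfl
      · rw [prodL_append, hL4]
        have hr : ((List.range 1).map (fun i => w i * v i)).prod = w 0 * v 0 := by
          rw [show List.range 1 = [0] from rfl]
          simp
        rw [hr]
        have hv0 : v 0 = Monoid.CoprodI.of (M := fun _ : Fin n => H) (i := e0) h := hvlast
        rw [hv0, map_mul, hσ0]
        simp only [prodL_cons, prodL_nil, mul_one]
        group
    · -- inductive step, k ≥ 1
      obtain ⟨M', hM'red, hM'ne, hM'head, hM'last, hM'prod⟩ :=
        ih (fun i => w (i + 1)) (fun i => v (i + 1)) hk
          (fun i hi => hw (i + 1) (by omega))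
          (fun i hi => hv (i + 1) (by omega))
          (by
            show v (k - 1 + 1) = _
            have hke : k - 1 + 1 = k := by omega
            rw [hke]
            simpa using hvlast)
      obtain ⟨L, hL1, hL2, hL3, hL4⟩ := conj_list e0 e1 hne h σ hσ1 hσ2 (hw 0 (by omega)).1
        (hw 0 (by omega)).2
      obtain ⟨y0, hy0⟩ := (hv 0 (by omega)).1
      have hy0ne : y0 ≠ 1 := by
        intro hc
        apply (hv 0 (by omega)).2
        rw [← hy0, hc, map_one]
      obtain ⟨a, L', rfl⟩ : ∃ a L', L = a :: L' := by
        cases L with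
        | nil => exact absurd rfl hL3
        | cons a L' => exact ⟨a, L', rfl⟩
      refine ⟨(a :: L') ++ (e1, y0) :: M', ⟨?_, ?_⟩, by simp, ?_, ?_, ?_⟩
      · intro p hp
        rcases List.mem_append.1 hp with hp | hp
        · exact hL1.1 p hp
        rcases List.mem_cons.1 hp with rfl | hp
        · exact hy0ne
        · exact hM'red.1 p hp
      · refine List.isChain_append.2 ⟨hL1.2, ?_, ?_⟩
        · refine List.isChain_cons.2 ⟨?_, hM'red.2⟩
          intro q hq
          exact fun hc => (hM'head q hq) hc.symm
        · intro x hx y hy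
          simp only [List.head?_cons, Option.mem_def, Option.some.injEq] at hy
          subst hy
          exact hL2 x (List.mem_of_mem_getLast? hx)
      · intro q hq
        simp only [List.cons_append, List.head?_cons, Option.mem_def, Option.some.injEq] at hq
        subst hq
        exact hL2 a (List.mem_cons_self)
      · intro q hq
        rw [List.getLast?_append_of_ne_nil _ (by simp)] at hq
        have : ((e1, y0) :: M').getLast? = M'.getLast? := by
          obtain ⟨b, M'', rfl⟩ : ∃ b M'', M' = b :: M'' := by
            cases M' with
            | nil => exact absurd rfl hM'ne
            | cons b M'' => exact ⟨b, M'', rfl⟩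
          exact List.getLast?_cons_cons
        rw [this] at hq
        exact hM'last q hq
      · rw [prodL_append, hL4, prodL_cons, hM'prod]
        have hr : ((List.range (k + 1)).map (fun i => w i * v i)).prod =
            (w 0 * v 0) * ((List.range k).map (fun i => w (i + 1) * v (i + 1))).prod := by
          rw [List.range_succ_eq_map, List.map_cons, List.prod_cons, List.map_map]
          rfl
        rw [hr, map_mul, map_mul, ← hy0, hσ0]
        group

end NFAux

theorem nf_starts_ends_sigma1 {H : Type} [Group H] (h : H) (hh : h ≠ 1) (n : ℕ) (hn : 2 ≤ n)
    (ρ : BraidGroup (n - 1) →* MulAut (Monoid.CoprodI (fun _ : Fin n => H)))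
    (hρ : IsArtinRep h ρ)
    (u : Monoid.CoprodI (fun _ : Fin n => H))
    (hu : NFStartsEnds
      (MonoidHom.range (Monoid.CoprodI.of (M := fun _ : Fin n => H) (i := ⟨0, by omega⟩)))
      (⨆ (j : Fin n) (_ : j ≠ (⟨0, by omega⟩ : Fin n)),
        MonoidHom.range (Monoid.CoprodI.of (M := fun _ : Fin n => H) (i := j)))
      (Monoid.CoprodI.of (i := (⟨0, by omega⟩ : Fin n)) h) u) :
    NFStartsEnds
      (MonoidHom.range (Monoid.CoprodI.of (M := fun _ : Fin n => H) (i := ⟨0, by omega⟩)))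
      (⨆ (j : Fin n) (_ : j ≠ (⟨0, by omega⟩ : Fin n)),
        MonoidHom.range (Monoid.CoprodI.of (M := fun _ : Fin n => H) (i := j)))
      (Monoid.CoprodI.of (i := (⟨0, by omega⟩ : Fin n)) h)
      (ρ (braidGen (⟨0, by omega⟩ : Fin (n - 1))) u) := by
  classical
  obtain ⟨m, w, v, hm, hw, hv, hvl, hueq⟩ := hu
  have hn1 : 0 < n - 1 := by omega
  set e0 : Fin n := ⟨0, by omega⟩ with he0
  set e1 : Fin n := ⟨1, by omega⟩ with he1
  set k0 : Fin (n - 1) := ⟨0, hn1⟩ with hk0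
  set σ : Monoid.CoprodI (fun _ : Fin n => H) ≃* Monoid.CoprodI (fun _ : Fin n => H) :=
    ρ (braidGen k0) with hσ
  have hidx0 : idx0 k0 = e0 := rfl
  have hidx1 : idx1 k0 = e1 := rfl
  have hne : e0 ≠ e1 := by
    intro hc
    have := congrArg Fin.val hc
    simp [he0, he1] at this
  have hσ0 : ∀ y : H, σ (Monoid.CoprodI.of (M := fun _ : Fin n => H) (i := e0) y) =
      (Monoid.CoprodI.of (M := fun _ : Fin n => H) (i := e0) h)⁻¹ *
        Monoid.CoprodI.of (M := fun _ : Fin n => H) (i := e1) y *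
        Monoid.CoprodI.of (M := fun _ : Fin n => H) (i := e0) h := fun y => (hρ k0).1 y
  have hσ1 : ∀ y : H, σ (Monoid.CoprodI.of (M := fun _ : Fin n => H) (i := e1) y) =
      Monoid.CoprodI.of (M := fun _ : Fin n => H) (i := e0) (h * y * h⁻¹) := by
    intro y
    rw [map_mul, map_mul, map_inv]
    exact (hρ k0).2.1 y
  have hσ2 : ∀ j : Fin n, j ≠ e0 → j ≠ e1 → ∀ y : H,
      σ (Monoid.CoprodI.of (M := fun _ : Fin n => H) (i := j) y) =
      Monoid.CoprodI.of (M := fun _ : Fin n => H) (i := j) y :=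
    fun j hj0 hj1 y => (hρ k0).2.2 j hj0 hj1 y
  obtain ⟨M, hMred, hMne, hMhead, hMlast, hMprod⟩ :=
    NFAux.tail_list e0 e1 hne h hh σ hσ0 hσ1 hσ2 m w v hm hw hv hvl
  -- the big list
  have hBred : NFAux.Red ((e1, h⁻¹) :: M) := by
    constructor
    · intro p hp
      rcases List.mem_cons.1 hp with rfl | hp
      · exact inv_ne_one.2 hh
      · exact hMred.1 p hp
    · refine List.isChain_cons.2 ⟨?_, hMred.2⟩
      intro q hq
      exact fun hc => (hMhead q hq) hc.symm
  have hBhead : ∀ q ∈ ((e1, h⁻¹) :: M).head?, q.1 ≠ e0 := by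
    intro q hq
    simp only [List.head?_cons, Option.mem_def, Option.some.injEq] at hq
    subst hq
    exact hne.symm
  have hBlast : ∀ q ∈ ((e1, h⁻¹) :: M).getLast?, q.1 ≠ e0 := by
    intro q hq
    obtain ⟨b, M'', rfl⟩ : ∃ b M'', M = b :: M'' := by
      cases M with
      | nil => exact absurd rfl hMne
      | cons b M'' => exact ⟨b, M'', rfl⟩
    rw [List.getLast?_cons_cons] at hq
    have := hMlast q hq
    rw [this]
    exact hne.symm
  obtain ⟨P, g, hP, hgmem, hgne, hBprod⟩ :=
    NFAux.grouping e0 ((e1, h⁻¹) :: M).length _ le_rfl hBred (by simp) hBhead hBlast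
  -- compute σ u
  set h1 : Monoid.CoprodI (fun _ : Fin n => H) :=
    Monoid.CoprodI.of (M := fun _ : Fin n => H) (i := e0) h with hh1
  have hσu : σ u = h1⁻¹ * ((P.map fun p => p.1 * p.2).prod * (g * h1)) := by
    have h2 : σ u = (σ h1)⁻¹ * σ (((List.range m).map (fun i => w i * v i)).prod) := by
      rw [hueq, map_mul, map_inv]
    have h3 : NFAux.prodL ((e1, h⁻¹) :: M) =
        (Monoid.CoprodI.of (M := fun _ : Fin n => H) (i := e1) h)⁻¹ *
          (h1 * σ (((List.range m).map (fun i => w i * v i)).prod) * h1⁻¹) := by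
      rw [NFAux.prodL_cons, hMprod, map_inv]
    rw [h2, hσ0 h]
    rw [hBprod] at h3
    calc (h1⁻¹ * Monoid.CoprodI.of (M := fun _ : Fin n => H) (i := e1) h * h1)⁻¹ *
          σ (((List.range m).map (fun i => w i * v i)).prod)
        = h1⁻¹ * ((Monoid.CoprodI.of (M := fun _ : Fin n => H) (i := e1) h)⁻¹ *
            (h1 * σ (((List.range m).map (fun i => w i * v i)).prod) * h1⁻¹)) * h1 := by
          group
      _ = h1⁻¹ * ((P.map fun p => p.1 * p.2).prod * g) * h1 := by rw [← h3]
      _ = h1⁻¹ * ((P.map fun p => p.1 * p.2).prod * (g * h1)) := by group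
  -- final witnesses
  refine ⟨P.length + 1,
    fun i => if i < P.length then (P.getD i (1, 1)).1 else g,
    fun i => if i < P.length then (P.getD i (1, 1)).2 else h1,
    by omega, ?_, ?_, ?_, ?_⟩
  · intro i hi
    by_cases hip : i < P.length
    · simp only [if_pos hip]
      have hmem : P.getD i (1, 1) ∈ P := by
        rw [List.getD_eq_getElem _ _ hip]
        exact List.getElem_mem hip
      exact (hP _ hmem).1
    · simp only [if_neg hip]
      exact ⟨hgmem, hgne⟩
  · intro i hi
    have hip : i < P.length := by omega
    simp only [if_pos hip]
    have hmem : P.getD i (1, 1) ∈ P := by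
      rw [List.getD_eq_getElem _ _ hip]
      exact List.getElem_mem hip
    exact (hP _ hmem).2
  · have hPl : P.length + 1 - 1 = P.length := by omega
    rw [hPl]
    simp only [lt_irrefl, if_false]
  · rw [List.range_succ, List.map_append, List.prod_append]
    have hlast' : ((fun i => if i < P.length then (P.getD i (1, 1)).1 else g) P.length *
        (fun i => if i < P.length then (P.getD i (1, 1)).2 else h1) P.length) = g * h1 := by
      simp only [lt_irrefl, if_neg, if_false]
    have hmap' : (List.range P.length).map
          (fun i => (fun i => if i < P.length then (P.getD i (1, 1)).1 else g) i *
            (fun i => if i < P.length then (P.getD i (1, 1)).2 else h1) i) =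
        P.map (fun p => p.1 * p.2) := by
      rw [← NFAux.map_range_getD (1, 1) (fun p => p.1 * p.2) P]
      apply List.map_congr_left
      intro i hi
      rw [List.mem_range] at hi
      simp only [if_pos hi]
    simp only [List.map_singleton, List.prod_singleton]
    rw [hlast', hmap', ← mul_assoc] at *
    rw [hσu]
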